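/- Let X = [[1,0,0],[0,0,t⁻¹],[0,t²,0]] and Y = [[0,1,0],[t,0,0],[0,0,1]] be matrices over ℤ[t,t⁻¹]. Then for every integer i ≥ 1, Y^i · X ≠ X · Y^i. -/

import Mathlib

open Matrix LaurentPolynomial

lemma T_inj {n m : ℤ} (h : (T n : LaurentPolynomial ℤ) = T m) : n = m := by
  have h' : (Finsupp.single n (1:ℤ) : ℤ →₀ ℤ) = Finsupp.single m 1 := congrArg AddMonoidAlgebra.coeff h
  exact (Finsupp.single_left_inj one_ne_zero).mp h'

lemma T_ne_zero' (n : ℤ) : (T n : LaurentPolynomial ℤ) ≠ 0 :=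
  (isUnit_T n).ne_zero

lemma Ypow (k : ℕ) :
    (!![0, 1, 0; T 1, 0, 0; 0, 0, 1] : Matrix (Fin 3) (Fin 3) (LaurentPolynomial ℤ)) ^ (2*k)
      = !![T k, 0, 0; 0, T k, 0; 0, 0, 1] ∧
    (!![0, 1, 0; T 1, 0, 0; 0, 0, 1] : Matrix (Fin 3) (Fin 3) (LaurentPolynomial ℤ)) ^ (2*k+1)
      = !![0, T k, 0; T (k+1), 0, 0; 0, 0, 1] := by
  induction k with
  | zero => constructor <;> simp [Matrix.one_fin_three]
  | succ n ih =>
    have h1 : 2*(n+1) = (2*n+1)+1 := by ring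
    have e1 : (!![0, 1, 0; T 1, 0, 0; 0, 0, 1] : Matrix (Fin 3) (Fin 3) (LaurentPolynomial ℤ)) ^ (2*(n+1)) = !![T (n+1), 0, 0; 0, T (n+1), 0; 0, 0, 1] := by
      rw [h1, pow_succ, ih.2, Matrix.mul_fin_three]
      simp only [mul_zero, zero_mul, mul_one, one_mul, add_zero, zero_add, ← T_add]
    refine ⟨e1, ?_⟩
    rw [pow_succ, e1, Matrix.mul_fin_three]
    simp only [mul_zero, zero_mul, mul_one, one_mul, add_zero, zero_add, ← T_add]
    push_cast
    ring_nf

theorem stmt4 :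
    let X : Matrix (Fin 3) (Fin 3) (LaurentPolynomial ℤ) := !![1, 0, 0; 0, 0, T (-1); 0, T 2, 0]
    let Y : Matrix (Fin 3) (Fin 3) (LaurentPolynomial ℤ) := !![0, 1, 0; T 1, 0, 0; 0, 0, 1]
    ∀ i : ℕ, 1 ≤ i → Y ^ i * X ≠ X * Y ^ i := by
  intro X Y i hi h
  rcases Nat.even_or_odd i with ⟨k, hk⟩ | ⟨k, hk⟩
  · have hk1 : 1 ≤ k := by omega
    have hY : Y ^ i = !![T k, 0, 0; 0, T k, 0; 0, 0, 1] := by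
      rw [hk, show k + k = 2 * k by ring]; exact (Ypow k).1
    rw [hY] at h
    have h12 := congrFun (congrFun h 1) 2
    rw [Matrix.mul_fin_three, Matrix.mul_fin_three] at h12
    simp only [X, Matrix.cons_val', Matrix.cons_val_zero, Matrix.cons_val_one, Matrix.head_cons,
      Matrix.empty_val', Matrix.cons_val_fin_one, Matrix.head_fin_const, Matrix.cons_val_two,
      Matrix.tail_cons, mul_zero, zero_mul, mul_one, one_mul, add_zero, zero_add, ← T_add] at h12
    have := T_inj h12
    omega
  · have hY : Y ^ i = !![0, T k, 0; T (k+1), 0, 0; 0, 0, 1] := by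
      rw [hk]; exact (Ypow k).2
    rw [hY] at h
    have h02 := congrFun (congrFun h 0) 2
    rw [Matrix.mul_fin_three, Matrix.mul_fin_three] at h02
    simp only [X, Matrix.cons_val', Matrix.cons_val_zero, Matrix.cons_val_one, Matrix.head_cons,
      Matrix.empty_val', Matrix.cons_val_fin_one, Matrix.head_fin_const, Matrix.cons_val_two,
      Matrix.tail_cons, mul_zero, zero_mul, mul_one, one_mul, add_zero, zero_add, ← T_add] at h02
    exact T_ne_zero' _ h02
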